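/- For every Lagrangian subspace 𝔥' ⊆ 𝔤, the element r = (p₊ ⊗ id)(t) lies in the subspace 𝔤₊ ⊗ 𝔤₊ + 𝔤 ⊗ 𝔥' + 𝔥' ⊗ 𝔤 of 𝔤 ⊗ 𝔤. -/

import Mathlib

open TensorProduct

variable (k : Type*) [Field k]
variable (g : Type*) [AddCommGroup g] [Module k g]

/-- The subspace `U ⊗ V` of `g ⊗ g` spanned by elementary tensors `u ⊗ v`, `u ∈ U`, `v ∈ V`. -/
def tsub (U V : Submodule k g) : Submodule k (g ⊗[k] g) :=
  Submodule.span k {z | ∃ u ∈ U, ∃ v ∈ V, z = u ⊗ₜ[k] v}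

/-- A subspace is Lagrangian when it equals its own orthogonal complement. -/
def IsLagrangian (B : g →ₗ[k] g →ₗ[k] k) (W : Submodule k g) : Prop :=
  ∀ x : g, x ∈ W ↔ ∀ w ∈ W, B w x = 0

/-- The contraction `(⟨x,·⟩ ⊗ id)(t)` of a 2-tensor against `x` in the first factor. -/
noncomputable def contractFst (B : g →ₗ[k] g →ₗ[k] k) (x : g) : g ⊗[k] g →ₗ[k] g :=
  (TensorProduct.lid k g).toLinearMap ∘ₗ TensorProduct.map (B x) LinearMap.id

theorem stmt2 [FiniteDimensional k g] (B : g →ₗ[k] g →ₗ[k] k)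
    (hsymm : ∀ x y : g, B x y = B y x)
    (hnondeg : ∀ x : g, (∀ y : g, B x y = 0) → x = 0)
    -- `t` is the canonical element of `B`
    (t : g ⊗[k] g) (ht : ∀ x : g, contractFst k g B x t = x)
    -- `𝔤₊`, `𝔤₋` Lagrangian with `𝔤 = 𝔤₊ ⊕ 𝔤₋`
    (gp gm : Submodule k g) (hgp : IsLagrangian k g B gp) (hgm : IsLagrangian k g B gm)
    (hcompl : IsCompl gp gm)
    -- `p₊` is the projection onto `𝔤₊` along `𝔤₋`
    (pp : g →ₗ[k] g) (hpp : ∀ x ∈ gp, pp x = x) (hpm : ∀ x ∈ gm, pp x = 0) :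
    -- for every Lagrangian subspace `𝔥'`, `r = (p₊ ⊗ id)(t) ∈ 𝔤₊ ⊗ 𝔤₊ + 𝔤 ⊗ 𝔥' + 𝔥' ⊗ 𝔤`
    ∀ H' : Submodule k g, IsLagrangian k g B H' →
      TensorProduct.map pp LinearMap.id t ∈
        tsub k g gp gp ⊔ tsub k g ⊤ H' ⊔ tsub k g H' ⊤ := by
  intro H' hH'
  classical
  -- decomposition along gp ⊕ gm
  have hdec : ∀ x : g, ∃ a ∈ gp, ∃ b ∈ gm, x = a + b := by
    intro x
    have hx : x ∈ gp ⊔ gm := by rw [hcompl.sup_eq_top]; trivial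
    obtain ⟨a, ha, b, hb, h⟩ := Submodule.mem_sup.mp hx
    exact ⟨a, ha, b, hb, h.symm⟩
  have hppmem : ∀ x : g, pp x ∈ gp := by
    intro x; obtain ⟨a, ha, b, hb, rfl⟩ := hdec x
    rw [map_add, hpp a ha, hpm b hb, add_zero]; exact ha
  -- the B-adjoint of pp is 1 - pp
  have hBpp : ∀ x y : g, B (pp x) y = B x (y - pp y) := by
    intro x y
    obtain ⟨a, ha, b, hb, rfl⟩ := hdec x
    obtain ⟨a', ha', b', hb', rfl⟩ := hdec y
    have h1 : pp (a + b) = a := by rw [map_add, hpp a ha, hpm b hb, add_zero]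
    have h2 : (a' + b') - pp (a' + b') = b' := by
      rw [map_add, hpp a' ha', hpm b' hb', add_zero]; abel
    have hz1 : B a a' = 0 := (hgp a').mp ha' a ha
    have hz2 : B b b' = 0 := (hgm b').mp hb' b hb
    rw [h1, h2]
    simp [map_add, hz1, hz2]
  -- duality
  have hnd : LinearMap.BilinForm.Nondegenerate B :=
    ⟨fun x hx => hnondeg x hx, fun y hy => hnondeg y fun x => (hsymm y x).trans (hy x)⟩
  set φ : g ≃ₗ[k] Module.Dual k g := LinearMap.BilinForm.toDual B hnd with hφdef
  have hφ : ∀ x y : g, φ x y = B x y := fun _ _ => rfl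
  set Ψ : (g ⊗[k] g) ≃ₗ[k] (g →ₗ[k] g) :=
    (TensorProduct.congr φ (LinearEquiv.refl k g)).trans (dualTensorHomEquiv k g g) with hΨdef
  have hΨtmul : ∀ a b x : g, Ψ (a ⊗ₜ[k] b) x = B a x • b := by
    intro a b x
    simp [hΨdef, TensorProduct.congr_tmul, dualTensorHomEquiv,
      dualTensorHomEquivOfBasis_apply, dualTensorHom_apply, hφ]
  have hΨc : ∀ (s : g ⊗[k] g) (x : g), Ψ s x = contractFst k g B x s := by
    intro s x
    induction s using TensorProduct.induction_on with
    | zero => simp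
    | tmul a b =>
        rw [hΨtmul]
        simp [contractFst, hsymm a x]
    | add u v hu hv => simp only [map_add, LinearMap.add_apply, hu, hv]
  have hΨt : ∀ x : g, Ψ t x = x := fun x => by rw [hΨc, ht]
  have hΨleft : ∀ (A A' : g →ₗ[k] g), (∀ a x : g, B (A a) x = B a (A' x)) →
      ∀ (s : g ⊗[k] g) (x : g),
        Ψ (TensorProduct.map A LinearMap.id s) x = Ψ s (A' x) := by
    intro A A' h s x
    induction s using TensorProduct.induction_on with
    | zero => simp
    | tmul a b => rw [TensorProduct.map_tmul, hΨtmul, hΨtmul, LinearMap.id_apply, h a x]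
    | add u v hu hv => simp only [map_add, LinearMap.add_apply, hu, hv]
  have hΨright : ∀ (C : g →ₗ[k] g) (s : g ⊗[k] g) (x : g),
      Ψ (TensorProduct.map LinearMap.id C s) x = C (Ψ s x) := by
    intro C s x
    induction s using TensorProduct.induction_on with
    | zero => simp
    | tmul a b => rw [TensorProduct.map_tmul, hΨtmul, hΨtmul, LinearMap.id_apply, map_smul]
    | add u v hu hv => simp only [map_add, LinearMap.add_apply, hu, hv, map_add]
  -- moving an operator across t
  have move : ∀ (A A' : g →ₗ[k] g), (∀ a x : g, B (A a) x = B a (A' x)) →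
      TensorProduct.map LinearMap.id A' t = TensorProduct.map A LinearMap.id t := by
    intro A A' h
    apply Ψ.injective
    apply LinearMap.ext
    intro x
    rw [hΨright, hΨleft A A' h, hΨt, hΨt]
  -- composition helpers
  have comp2 : ∀ (A C : g →ₗ[k] g) (s : g ⊗[k] g),
      TensorProduct.map A LinearMap.id (TensorProduct.map LinearMap.id C s)
        = TensorProduct.map A C s := by
    intro A C s
    have h := TensorProduct.map_comp A LinearMap.id LinearMap.id C
    rw [LinearMap.comp_id, LinearMap.id_comp] at h
    rw [h]; rfl
  have comp1 : ∀ (A A₂ : g →ₗ[k] g) (s : g ⊗[k] g),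
      TensorProduct.map A LinearMap.id (TensorProduct.map A₂ LinearMap.id s)
        = TensorProduct.map (A ∘ₗ A₂) LinearMap.id s := by
    intro A A₂ s
    have h := TensorProduct.map_comp A (LinearMap.id : g →ₗ[k] g) A₂ (LinearMap.id : g →ₗ[k] g)
    rw [LinearMap.id_comp] at h
    rw [h]; rfl
  -- construction of a good complement of H'
  obtain ⟨M', hM'⟩ := Submodule.exists_isCompl (gp ⊓ H')
  set K : Submodule k g := gp ⊓ H' with hKdef
  set Msub : Submodule k g := M' ⊓ gp with hMsubdef
  obtain ⟨R0, hR0⟩ := Submodule.exists_isCompl (H' ⊔ Msub)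
  set D : Submodule k g := Msub ⊔ R0 with hDdef
  have hHD : IsCompl H' D := by
    constructor
    · rw [Submodule.disjoint_def]
      intro x hxH hxD
      obtain ⟨m, hm, r, hr, rfl⟩ := Submodule.mem_sup.mp hxD
      have hrmem : r ∈ (H' ⊔ Msub) ⊓ R0 := by
        constructor
        · have : r = (m + r) - m := by abel
          rw [this]
          exact Submodule.sub_mem _ (Submodule.mem_sup_left hxH) (Submodule.mem_sup_right hm)
        · exact hr
      have hr0 : r = 0 := by
        rw [hR0.inf_eq_bot] at hrmem
        simpa using hrmem
      subst hr0
      rw [add_zero] at hxH ⊢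
      have hmem : m ∈ K ⊓ M' := ⟨⟨hm.2, hxH⟩, hm.1⟩
      rw [hM'.inf_eq_bot] at hmem
      simpa using hmem
    · rw [codisjoint_iff]
      rw [hDdef, ← sup_assoc, hR0.sup_eq_top]
  -- the projection f onto H' along D
  set f : g →ₗ[k] g := H'.subtype ∘ₗ (H'.projectionOnto D hHD) with hfdef
  have hfmem : ∀ x : g, f x ∈ H' := fun x => (H'.projectionOnto D hHD x).2
  have hfH : ∀ w ∈ H', f w = w := by
    intro w hw
    have := Submodule.linearProjOfIsCompl_apply_left hHD ⟨w, hw⟩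
    simp only [hfdef, LinearMap.comp_apply, Submodule.coe_subtype]
    rw [this]
  have hfD : ∀ d ∈ D, f d = 0 := by
    intro d hd
    have := Submodule.linearProjOfIsCompl_apply_right hHD ⟨d, hd⟩
    simp only [hfdef, LinearMap.comp_apply, Submodule.coe_subtype]
    rw [this]; rfl
  -- f maps gp into K
  have hgpKM : ∀ u ∈ gp, ∃ a ∈ K, ∃ m ∈ Msub, u = a + m := by
    intro u hu
    have hx : u ∈ K ⊔ M' := by rw [hM'.sup_eq_top]; trivial
    obtain ⟨a, ha, m, hm, h⟩ := Submodule.mem_sup.mp hx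
    have hmgp : m ∈ gp := by
      have : m = u - a := by rw [← h]; abel
      rw [this]
      exact Submodule.sub_mem _ hu ha.1
    exact ⟨a, ha, m, ⟨hm, hmgp⟩, h.symm⟩
  have hfgp : ∀ u ∈ gp, f u ∈ K := by
    intro u hu
    obtain ⟨a, haK, m, hmM, rfl⟩ := hgpKM u hu
    rw [map_add, hfH a haK.2, hfD m (Submodule.mem_sup_left hmM), add_zero]
    exact haK
  -- the B-adjoint of f
  set adjf : g →ₗ[k] g := φ.symm.toLinearMap ∘ₗ f.dualMap ∘ₗ φ.toLinearMap with hadjfdef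
  have hadjf : ∀ x y : g, B (adjf x) y = B x (f y) := by
    intro x y
    have h1 : φ (adjf x) = f.dualMap (φ x) := by
      simp [hadjfdef]
    have h2 : B (adjf x) y = φ (adjf x) y := rfl
    rw [h2, h1]
    rfl
  have he : ∀ x : g, x - adjf x ∈ H' := by
    intro x
    rw [hH']
    intro w hw
    have h1 : B w (adjf x) = B w x := by
      rw [hsymm w (adjf x), hadjf x w, hfH w hw, hsymm x w]
    rw [map_sub, h1, sub_self]
  set e : g →ₗ[k] g := LinearMap.id - adjf with hedef
  have hemem : ∀ x : g, e x ∈ H' := fun x => he x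
  -- decomposition of r
  have hmove1 : TensorProduct.map LinearMap.id adjf t = TensorProduct.map f LinearMap.id t := by
    apply move
    intro a x
    rw [hsymm a (adjf x), hadjf x a, hsymm x (f a)]
  have hmove2 : TensorProduct.map LinearMap.id (LinearMap.id - pp) t
      = TensorProduct.map pp LinearMap.id t := by
    apply move
    intro a x
    rw [hBpp a x]
    rfl
  have hsplit1 : TensorProduct.map pp LinearMap.id t
      = TensorProduct.map pp e t + TensorProduct.map pp adjf t := by
    have hsum : e + adjf = LinearMap.id := by rw [hedef, sub_add_cancel]
    rw [← hsum, TensorProduct.map_add_right, LinearMap.add_apply]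
  have hstep2 : TensorProduct.map pp adjf t
      = TensorProduct.map (pp ∘ₗ f) LinearMap.id t := by
    rw [← comp2 pp adjf t, hmove1, comp1]
  have hsplit2 : TensorProduct.map (pp ∘ₗ f) LinearMap.id t
      = TensorProduct.map (pp ∘ₗ f) pp t
        + TensorProduct.map ((pp ∘ₗ f) ∘ₗ pp) LinearMap.id t := by
    have hsum : pp + (LinearMap.id - pp) = LinearMap.id := by rw [add_sub_cancel]
    have hlast : TensorProduct.map (pp ∘ₗ f) (LinearMap.id - pp) t
        = TensorProduct.map ((pp ∘ₗ f) ∘ₗ pp) LinearMap.id t := by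
      rw [← comp2 (pp ∘ₗ f) (LinearMap.id - pp) t, hmove2, comp1]
    rw [← hlast, ← hsum, TensorProduct.map_add_right, LinearMap.add_apply]
    rw [add_sub_cancel]
  -- membership helper
  have memT : ∀ (U V : Submodule k g) (A C : g →ₗ[k] g), (∀ x, A x ∈ U) → (∀ x, C x ∈ V) →
      ∀ s : g ⊗[k] g, TensorProduct.map A C s ∈ tsub k g U V := by
    intro U V A C hA hC s
    induction s using TensorProduct.induction_on with
    | zero => simp
    | tmul a b =>
        rw [TensorProduct.map_tmul]
        exact Submodule.subset_span ⟨A a, hA a, C b, hC b, rfl⟩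
    | add u v hu hv =>
        rw [map_add]
        exact Submodule.add_mem _ hu hv
  -- final memberships
  have hmem1 : TensorProduct.map pp e t ∈ tsub k g ⊤ H' :=
    memT ⊤ H' pp e (fun _ => trivial) hemem t
  have hmem2 : TensorProduct.map (pp ∘ₗ f) pp t ∈ tsub k g gp gp :=
    memT gp gp (pp ∘ₗ f) pp (fun x => hppmem (f x)) hppmem t
  have hmem3 : TensorProduct.map ((pp ∘ₗ f) ∘ₗ pp) LinearMap.id t ∈ tsub k g H' ⊤ := by
    apply memT H' ⊤ _ _ _ (fun _ => trivial)
    intro x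
    have hK : f (pp x) ∈ K := hfgp (pp x) (hppmem x)
    simp only [LinearMap.comp_apply]
    rw [hpp (f (pp x)) hK.1]
    exact hK.2
  rw [hsplit1, hstep2, hsplit2]
  refine Submodule.add_mem _ ?_ (Submodule.add_mem _ ?_ ?_)
  · exact Submodule.mem_sup_left (Submodule.mem_sup_right hmem1)
  · exact Submodule.mem_sup_left (Submodule.mem_sup_left hmem2)
  · exact Submodule.mem_sup_right hmem3
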